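/- arXiv:2411.16338 — 2 statements merged into one kernel-verified Lean document; each statement's English description precedes it below -/
import Mathlib

section
/- Let L be a linear order that is scattered (there is no order embedding of ℚ into L) and indecomposable (for every partition of L into an initial segment I and its complement F, L order-embeds into I or L order-embeds into F). Then L is indecomposable to the right (for every such partition with F nonempty, L order-embeds into F) or L is indecomposable to the left (for every such partition with I nonempty, L order-embeds into I). -/
namespace IndecAux

variable {L : Type*} [LinearOrder L]

/-- `P T` : `L` embeds into `T` (phrased via strictly monotone functions). -/
def P (L : Type*) [LinearOrder L] (T : Set L) : Prop :=
  ∃ g : L → L, StrictMono g ∧ ∀ t, g t ∈ T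

lemma p_mono {S T : Set L} (h : S ⊆ T) : P L S → P L T := by
  rintro ⟨g, hg, hm⟩
  exact ⟨g, hg, fun t => h (hm t)⟩

lemma p_iff {T : Set L} : P L T ↔ Nonempty (L ↪o T) := by
  constructor
  · rintro ⟨g, hg, hm⟩
    exact ⟨OrderEmbedding.ofStrictMono (fun t => ⟨g t, hm t⟩)
      (fun x y h => Subtype.mk_lt_mk.2 (hg h))⟩
  · rintro ⟨f⟩
    exact ⟨fun t => (f t : L), fun x y h => Subtype.coe_lt_coe.2 (f.strictMono h),
      fun t => (f t).2⟩

section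

variable (hind : ∀ I : Set L, IsLowerSet I → P L I ∨ P L Iᶜ)

include hind

lemma p_split {T : Set L} (hT : P L T) (c : L) :
    P L (T ∩ Set.Iic c) ∨ P L (T ∩ Set.Ioi c) := by
  obtain ⟨g, hg, hm⟩ := hT
  have hlow : IsLowerSet {t : L | g t ≤ c} := by
    intro x y hxy hx
    exact le_trans (hg.monotone hxy) hx
  rcases hind _ hlow with ⟨u, hu, hmu⟩ | ⟨u, hu, hmu⟩
  · left
    exact ⟨fun t => g (u t), hg.comp hu, fun t => ⟨hm _, hmu t⟩⟩
  · right
    refine ⟨fun t => g (u t), hg.comp hu, fun t => ⟨hm _, ?_⟩⟩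
    exact not_le.1 (hmu t)

end

/-- The key combinatorial lemma: from a "dense splittable interval relation" we embed `ℚ`. -/
lemma exists_rat_emb {W : L → L → Prop}
    (hmono : ∀ {x x' y y' : L}, x ≤ x' → y' ≤ y → W x' y' → W x y)
    (hcut : ∀ {x y z : L}, x ≤ y → y ≤ z → W x z → W x y ∨ W y z)
    (hsplit : ∀ {x y : L}, x < y → W x y → ∃ z, x < z ∧ z < y ∧ W x z ∧ W z y)
    (hirr : ∀ x : L, ¬ W x x)
    {b a : L} (hba : b < a) (hW : W b a) : Nonempty (ℚ ↪o L) := by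
  classical
  set E : L → L → Prop := fun x y => ¬ W (min x y) (max x y) with hE
  have hEsymm : ∀ {x y}, E x y → E y x := by
    intro x y h
    simpa [hE, min_comm, max_comm] using h
  have hErfl : ∀ x, E x x := by
    intro x; simpa [hE] using hirr x
  have hEle : ∀ {x y : L}, x ≤ y → (E x y ↔ ¬ W x y) := by
    intro x y h
    simp [hE, min_eq_left h, max_eq_right h]
  have key : ∀ x y z : L, x ≤ z → E x y → E y z → E x z := by
    intro x y z hxz h1 h2
    rw [hEle hxz]
    rcases le_total y x with h | h
    · intro hw
      exact (hEle (le_trans h hxz)).1 h2 (hmono h le_rfl hw)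
    · rcases le_total y z with h' | h'
      · intro hw
        rcases hcut h h' hw with hw' | hw'
        · exact (hEle h).1 h1 hw'
        · exact (hEle h').1 h2 hw'
      · intro hw
        exact (hEle h).1 h1 (hmono le_rfl h' hw)
  have hEtrans : ∀ {x y z : L}, E x y → E y z → E x z := by
    intro x y z h1 h2
    rcases le_total x z with h | h
    · exact key x y z h h1 h2
    · exact hEsymm (key z y x h (hEsymm h2) (hEsymm h1))
  let s : Setoid L := ⟨E, ⟨fun x => hErfl x, fun h => hEsymm h, fun h h' => hEtrans h h'⟩⟩
  letI : LinearOrder (Quotient s) := LinearOrder.lift' Quotient.out Quotient.out_injective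
  letI : Preorder (Quotient s) := this.toPartialOrder.toPreorder
  have hlt_iff : ∀ q₁ q₂ : Quotient s, q₁ < q₂ ↔ q₁.out < q₂.out := fun _ _ => Iff.rfl
  -- the `out` of the class of `z` stays strictly between the ends of a W-interval around z
  have hout_between : ∀ {x z : L}, x < z → W x z → x < (Quotient.mk s z).out := by
    intro x z hxz hw
    have hez : E (Quotient.mk s z).out z := Quotient.exact (Quotient.out_eq (Quotient.mk s z))
    by_contra hle
    push_neg at hle
    -- (mk z).out ≤ x < z and E ((mk z).out) z, but W ((mk z).out) z via hmono
    exact (hEle (le_trans hle hxz.le)).1 hez (hmono hle le_rfl hw)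
  have hout_between' : ∀ {z y : L}, z < y → W z y → (Quotient.mk s z).out < y := by
    intro z y hzy hw
    have hez : E (Quotient.mk s z).out z := Quotient.exact (Quotient.out_eq (Quotient.mk s z))
    by_contra hle
    push_neg at hle
    exact (hEle (le_trans hzy.le hle)).1 (hEsymm hez) (hmono le_rfl hle hw)
  haveI : DenselyOrdered (Quotient s) := by
    constructor
    intro q₁ q₂ h
    have hlt : q₁.out < q₂.out := (hlt_iff _ _).1 h
    have hW12 : W q₁.out q₂.out := by
      by_contra hnw
      have hE12 : E q₁.out q₂.out := (hEle hlt.le).2 hnw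
      exact absurd (Quotient.out_equiv_out.1 hE12) (ne_of_lt h)
    obtain ⟨z, hxz, hzy, hWxz, hWzy⟩ := hsplit hlt hW12
    refine ⟨Quotient.mk s z, ?_, ?_⟩
    · exact (hlt_iff _ _).2 (hout_between hxz hWxz)
    · exact (hlt_iff _ _).2 (hout_between' hzy hWzy)
  haveI : Nontrivial (Quotient s) := by
    refine ⟨Quotient.mk s b, Quotient.mk s a, fun h => ?_⟩
    exact (hEle hba.le).1 (Quotient.exact h) hW
  obtain ⟨F⟩ := Order.embedding_from_countable_to_dense ℚ (Quotient s)
  refine ⟨F.trans (OrderEmbedding.ofStrictMono Quotient.out ?_)⟩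
  intro q₁ q₂ h
  exact (hlt_iff _ _).1 h

end IndecAux

open IndecAux in
theorem indec {L : Type*} [LinearOrder L]
    (hscat : IsEmpty (ℚ ↪o L))
    (hindec : ∀ I : Set L, IsLowerSet I →
      Nonempty (L ↪o I) ∨ Nonempty (L ↪o ↥(Iᶜ))) :
    (∀ I : Set L, IsLowerSet I → (Iᶜ).Nonempty → Nonempty (L ↪o ↥(Iᶜ))) ∨
    (∀ I : Set L, IsLowerSet I → I.Nonempty → Nonempty (L ↪o I)) := by
  classical
  have hind : ∀ I : Set L, IsLowerSet I → P L I ∨ P L Iᶜ := by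
    intro I hI
    rcases hindec I hI with h | h
    · exact Or.inl (p_iff.2 h)
    · exact Or.inr (p_iff.2 h)
  by_contra hcon
  push_neg at hcon
  obtain ⟨⟨I₁, hI₁low, hI₁ne, hI₁⟩, I₂, hI₂low, hI₂ne, hI₂⟩ := hcon
  obtain ⟨a, ha⟩ := hI₁ne
  obtain ⟨b, hb⟩ := hI₂ne
  -- a is "right-bad", b is "left-bad"
  have haGr : ¬ P L (Set.Ici a) := by
    intro h
    refine not_nonempty_iff.2 hI₁ (p_iff.1 (p_mono ?_ h))
    intro x hx hxI
    exact ha (hI₁low hx hxI)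
  have hbGl : ¬ P L (Set.Iic b) := by
    intro h
    exact not_nonempty_iff.2 hI₂ (p_iff.1 (p_mono (fun x hx => hI₂low hx hb) h))
  -- totality: every point is left-good or right-good
  have htot : ∀ x : L, P L (Set.Iic x) ∨ P L (Set.Ici x) := by
    intro x
    rcases p_split hind ⟨id, strictMono_id, fun t => Set.mem_univ t⟩ x with h | h
    · exact Or.inl (p_mono Set.inter_subset_right h)
    · exact Or.inr (p_mono (fun w hw => le_of_lt hw.2) h)
  have haGl : P L (Set.Iic a) := (htot a).resolve_right haGr
  have hbGr : P L (Set.Ici b) := (htot b).resolve_left hbGl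
  have hba : b < a := by
    by_contra h
    push_neg at h
    exact haGr (p_mono (Set.Ici_subset_Ici.2 h) hbGr)
  -- preservation of goodness under strictly monotone maps
  have hpresL : ∀ (g : L → L), StrictMono g → ∀ x, P L (Set.Iic x) → P L (Set.Iic (g x)) := by
    rintro g hg x ⟨u, hu, hmu⟩
    exact ⟨fun t => g (u t), hg.comp hu, fun t => hg.monotone (hmu t)⟩
  have hpresR : ∀ (g : L → L), StrictMono g → ∀ x, P L (Set.Ici x) → P L (Set.Ici (g x)) := by
    rintro g hg x ⟨u, hu, hmu⟩
    exact ⟨fun t => g (u t), hg.comp hu, fun t => hg.monotone (hmu t)⟩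
  set Gl : Set L := {x | P L (Set.Iic x)} with hGl
  set Gr : Set L := {x | P L (Set.Ici x)} with hGr
  have hGrLower : IsLowerSet Gr := by
    intro x y hyx hx
    exact p_mono (Set.Ici_subset_Ici.2 hyx) hx
  have hGlUpper : IsUpperSet Gl := by
    intro x y hxy hx
    exact p_mono (Set.Iic_subset_Iic.2 hxy) hx
  -- L embeds into Gr
  have heGr : P L Gr := by
    rcases hind Gr hGrLower with h | ⟨g, hg, hm⟩
    · exact h
    · exact absurd (hpresR g hg b hbGr) (hm b)
  -- L embeds into Gl
  have heGl : P L Gl := by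
    rcases hind Glᶜ hGlUpper.compl with ⟨g, hg, hm⟩ | h
    · exact absurd (hpresL g hg a haGl) (hm a)
    · rwa [compl_compl] at h
  -- L embeds into the middle Gl ∩ Gr
  obtain ⟨u, hu, hmu⟩ := heGl
  obtain ⟨v, hv, hmv⟩ := heGr
  have hM : P L (Gl ∩ Gr) :=
    ⟨fun t => v (u t), hv.comp hu, fun t => ⟨hpresL v hv (u t) (hmu t), hmv (u t)⟩⟩
  obtain ⟨f, hf, hfM⟩ := hM
  set m : L := f b with hm
  have hmGl : P L (Set.Iic m) := (hfM b).1
  have hmGr : P L (Set.Ici m) := (hfM b).2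
  -- the interval relation
  set W : L → L → Prop := fun x y => P L (Set.Icc x y) with hW
  have hWmono : ∀ {x x' y y' : L}, x ≤ x' → y' ≤ y → W x' y' → W x y := by
    intro x x' y y' h1 h2 hw
    exact p_mono (Set.Icc_subset_Icc h1 h2) hw
  have hirr : ∀ x : L, ¬ W x x := by
    rintro x ⟨g, hg, hmg⟩
    have h1 := (hmg b).1.antisymm (hmg b).2
    have h2 := (hmg a).1.antisymm (hmg a).2
    exact absurd (h2.symm.trans h1) (ne_of_gt (hg hba))
  have hWcut : ∀ {x y z : L}, x ≤ y → y ≤ z → W x z → W x y ∨ W y z := by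
    intro x y z h1 h2 hw
    rcases p_split hind hw y with h | h
    · exact Or.inl (p_mono (fun w hw' => ⟨hw'.1.1, hw'.2⟩) h)
    · exact Or.inr (p_mono (fun w hw' => ⟨le_of_lt hw'.2, hw'.1.2⟩) h)
  have hWba : W b a := by
    rcases p_split hind hbGr a with h | h
    · exact p_mono (fun w hw' => ⟨hw'.1, hw'.2⟩) h
    · exact absurd (p_mono (fun w hw' => le_of_lt hw'.2) h) haGr
  have hWsplit : ∀ {x y : L}, x < y → W x y → ∃ z, x < z ∧ z < y ∧ W x z ∧ W z y := by
    intro x y hxy hw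
    obtain ⟨g, hg, hmg⟩ := hw
    refine ⟨g m, ?_, ?_, ?_, ?_⟩
    · rcases lt_or_eq_of_le (hmg m).1 with h | h
      · exact h
      · exfalso
        obtain ⟨w, hw', hww⟩ := hmGl
        refine hirr x ⟨fun t => g (w t), hg.comp hw', fun t => ⟨(hmg _).1, ?_⟩⟩
        rw [h]
        exact hg.monotone (hww t)
    · rcases lt_or_eq_of_le (hmg m).2 with h | h
      · exact h
      · exfalso
        obtain ⟨w, hw', hww⟩ := hmGr
        refine hirr y ⟨fun t => g (w t), hg.comp hw', fun t => ⟨?_, (hmg _).2⟩⟩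
        rw [← h]
        exact hg.monotone (hww t)
    · obtain ⟨w, hw', hww⟩ := hmGl
      exact ⟨fun t => g (w t), hg.comp hw', fun t => ⟨(hmg _).1, hg.monotone (hww t)⟩⟩
    · obtain ⟨w, hw', hww⟩ := hmGr
      exact ⟨fun t => g (w t), hg.comp hw', fun t => ⟨hg.monotone (hww t), (hmg _).2⟩⟩
  exact hscat.elim (Classical.choice
    (exists_rat_emb hWmono hWcut hWsplit hirr hba hWba))
end

section
/- Let α be a type and Z : (n : ℕ) → (Fin (n+1) → α) a family of finite sequences, with Z 0 0 = a for a fixed a : α. Suppose that for every n, the set of finite sequences of length n+1 arising as restrictions of some Z m (m ≥ n) to their first n+1 entries is finite. Then there exists f : ℕ → ℕ such that the sequence W : ℕ → α defined by W n = Z (f n) n satisfies: for every n, the first n+1 entries of Z (f (n+1)) agree with W 0, ..., W n. -/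
private lemma pigeon_fiber {β : Type*} {A : Set ℕ} (hA : A.Infinite)
    {φ : ℕ → β} (hfin : (φ '' A).Finite) :
    ∃ b, {m | m ∈ A ∧ φ m = b}.Infinite := by
  by_contra h
  push_neg at h
  have h : ∀ b, {m | m ∈ A ∧ φ m = b}.Finite := h
  have hsub : A ⊆ ⋃ b ∈ φ '' A, {m | m ∈ A ∧ φ m = b} := by
    intro m hm
    simp only [Set.mem_iUnion, Set.mem_setOf_eq]
    exact ⟨φ m, ⟨m, hm, rfl⟩, hm, rfl⟩
  exact hA ((hfin.biUnion (fun b _ => h b)).subset hsub)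

theorem coherent_subsequence {α : Type*} (a : α)
    (Z : (n : ℕ) → Fin (n + 1) → α)
    (hZ0 : Z 0 ⟨0, Nat.zero_lt_one⟩ = a)
    (hfin : ∀ n : ℕ,
      {g : Fin (n + 1) → α | ∃ m, ∃ h : n ≤ m, ∀ i : Fin (n + 1),
        g i = Z m ⟨i.val, by have := i.isLt; omega⟩}.Finite) :
    ∃ f : ℕ → ℕ, ∃ hf : ∀ n, n ≤ f n,
      ∀ n : ℕ, ∀ i : Fin (n + 1),
        Z (f (n + 1)) ⟨i.val, by have := i.isLt; have := hf (n + 1); omega⟩ =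
        Z (f i.val) ⟨i.val, by have := hf i.val; omega⟩ := by
  classical
  -- truncation of Z m to length n+1 (padded with a, irrelevant when n ≤ m)
  set T : (n m : ℕ) → Fin (n + 1) → α := fun n m i =>
    if h : i.val < m + 1 then Z m ⟨i.val, h⟩ else a with hT
  have hTval : ∀ n m (i : Fin (n + 1)) (hi : i.val < m + 1),
      T n m i = Z m ⟨i.val, hi⟩ := by
    intro n m i hi
    simp only [hT, dif_pos hi]
  -- finiteness of each level of truncations on infinite fibers
  have hfinT : ∀ n (A : Set ℕ), (∀ m ∈ A, n ≤ m) → ((fun m => T n m) '' A).Finite := by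
    intro n A hAn
    apply (hfin n).subset
    rintro g ⟨m, hm, rfl⟩
    refine ⟨m, hAn m hm, fun i => ?_⟩
    exact hTval n m i (by have := i.isLt; have := hAn m hm; omega)
  -- step: extend an infinitely-realized truncation
  have step : ∀ n (g : Fin (n + 1) → α), {m | n ≤ m ∧ T n m = g}.Infinite →
      ∃ g' : Fin (n + 2) → α, {m | n + 1 ≤ m ∧ T (n + 1) m = g'}.Infinite ∧
        ∀ i : Fin (n + 1), g' ⟨i.val, by omega⟩ = g i := by
    intro n g hg
    set A : Set ℕ := {m | m ∈ {m | n ≤ m ∧ T n m = g} ∧ n + 1 ≤ m} with hA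
    have hAinf : A.Infinite := by
      have : A = {m | n ≤ m ∧ T n m = g} \ {m | m < n + 1} := by
        ext m; simp only [hA, Set.mem_setOf_eq, Set.mem_diff, not_lt]
      rw [this]
      exact hg.diff (Set.finite_Iio (n + 1))
    obtain ⟨g', hg'⟩ := pigeon_fiber hAinf
      (φ := fun m => T (n + 1) m) (hfinT (n + 1) A (fun m hm => hm.2))
    refine ⟨g', ?_, ?_⟩
    · apply hg'.mono
      rintro m ⟨⟨⟨_, _⟩, h2⟩, h3⟩
      exact ⟨h2, h3⟩
    · obtain ⟨m, ⟨⟨hnm, hTm⟩, hm1⟩, hTm'⟩ := hg'.nonempty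
      intro i
      rw [← hTm', ← hTm]
  choose step' hstep1 hstep2 using step
  -- base: some truncation of length 1 is infinitely realized
  have hbase : ∃ g0 : Fin 1 → α, {m | 0 ≤ m ∧ T 0 m = g0}.Infinite := by
    obtain ⟨g0, hg0⟩ := pigeon_fiber Set.infinite_univ
      (φ := fun m => T 0 m) (hfinT 0 Set.univ (fun m _ => Nat.zero_le m))
    exact ⟨g0, hg0.mono (fun m hm => ⟨Nat.zero_le m, hm.2⟩)⟩
  obtain ⟨g0, hg0⟩ := hbase
  -- the chain
  let G : ∀ n, {g : Fin (n + 1) → α // {m | n ≤ m ∧ T n m = g}.Infinite} :=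
    fun n => Nat.rec ⟨g0, hg0⟩ (fun n p => ⟨step' n p.1 p.2, hstep1 n p.1 p.2⟩) n
  have hGcoh : ∀ n (i : Fin (n + 1)), (G (n + 1)).1 ⟨i.val, by have := i.isLt; omega⟩ = (G n).1 i :=
    fun n => hstep2 n (G n).1 (G n).2
  have hGchain : ∀ n (i : Fin (n + 1)),
      (G n).1 i = (G i.val).1 ⟨i.val, by omega⟩ := by
    intro n
    induction n with
    | zero => intro i; have : i = ⟨0, by omega⟩ := by ext; omega
              rw [this]
    | succ n ih =>
      intro i
      by_cases hi : i.val < n + 1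
      · have h1 : i = ⟨(⟨i.val, hi⟩ : Fin (n + 1)).val, by have := i.isLt; omega⟩ := by
          ext; rfl
        rw [h1, hGcoh n ⟨i.val, hi⟩, ih ⟨i.val, hi⟩]
      · have hv : i.val = n + 1 := by have := i.isLt; omega
        have h1 : i = ⟨n + 1, by omega⟩ := Fin.ext hv
        rw [h1]
  -- choose witnesses
  have hwit : ∀ n, ∃ m, n ≤ m ∧ T n m = (G n).1 := fun n => (G n).2.nonempty
  choose f hf1 hf2 using hwit
  refine ⟨f, hf1, ?_⟩
  intro n i
  have hi := i.isLt
  have e1 : Z (f (n + 1)) ⟨i.val, by have := hf1 (n + 1); omega⟩ =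
      (G (n + 1)).1 ⟨i.val, by omega⟩ := by
    rw [← hf2 (n + 1)]
    exact (hTval (n + 1) (f (n + 1)) ⟨i.val, by omega⟩ (by have := hf1 (n + 1); omega)).symm
  have e2 : Z (f i.val) ⟨i.val, by have := hf1 i.val; omega⟩ =
      (G i.val).1 ⟨i.val, by omega⟩ := by
    rw [← hf2 i.val]
    exact (hTval i.val (f i.val) ⟨i.val, by omega⟩ (by have := hf1 i.val; omega)).symm
  rw [e1, e2]
  exact hGchain (n + 1) ⟨i.val, by omega⟩
end
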